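/- For any unbounded set X ⊆ ℝⁿ and any R > 0, the tangent cone at infinity satisfies C∞X × {0} = cl(A_R) ∩ (ℝⁿ × {0}), where A_R := {(t·x, t) : x ∈ X, ‖x‖ ≥ R, t ∈ (0,∞)}. -/

import Mathlib

open Filter Topology

noncomputable section

/-- The tangent cone at infinity (asymptotic cone) of a set `X ⊆ ℝⁿ`. -/
def coneAtInfty {n : ℕ} (X : Set (EuclideanSpace ℝ (Fin n))) :
    Set (EuclideanSpace ℝ (Fin n)) :=
  {v | ∃ (x : ℕ → EuclideanSpace ℝ (Fin n)) (t : ℕ → ℝ),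
    (∀ k, x k ∈ X) ∧ (∀ k, 0 < t k) ∧
    Tendsto (fun k => ‖x k‖) atTop atTop ∧
    Tendsto (fun k => t k • x k) atTop (𝓝 v)}

lemma zero_mem_coneAtInfty {n : ℕ} (X : Set (EuclideanSpace ℝ (Fin n)))
    (hX : ∀ R' : ℝ, ∃ x ∈ X, R' < ‖x‖) : (0 : EuclideanSpace ℝ (Fin n)) ∈ coneAtInfty X := by
  choose x hxX hxn using fun k : ℕ => hX (k + 1)
  have hpos : ∀ k : ℕ, (0:ℝ) < ‖x k‖ := fun k => lt_trans (by positivity) (hxn k)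
  refine ⟨x, fun k => (‖x k‖ ^ 2)⁻¹, hxX, fun k => by have := hpos k; positivity, ?_, ?_⟩
  · refine tendsto_atTop_mono (fun k => ?_) tendsto_natCast_atTop_atTop
    exact le_of_lt (lt_of_le_of_lt (by linarith [Nat.cast_nonneg (α := ℝ) k]) (hxn k))
  · rw [tendsto_zero_iff_norm_tendsto_zero]
    have hb : ∀ k : ℕ, ‖(‖x k‖ ^ 2)⁻¹ • x k‖ ≤ ((k : ℝ) + 1)⁻¹ := by
      intro k
      rw [norm_smul, Real.norm_eq_abs, abs_of_pos (by have := hpos k; positivity), sq, mul_inv,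
        mul_assoc, inv_mul_cancel₀ (ne_of_gt (hpos k)), mul_one]
      exact inv_anti₀ (by positivity) (le_of_lt (hxn k))
    refine squeeze_zero (fun k => norm_nonneg _) hb ?_
    exact tendsto_one_div_add_atTop_nhds_zero_nat.congr (fun k => by rw [one_div])

theorem coneAtInfty_eq_closure_slice {n : ℕ} (X : Set (EuclideanSpace ℝ (Fin n)))
    (hX : ∀ R' : ℝ, ∃ x ∈ X, R' < ‖x‖) (R : ℝ) (hR : 0 < R) :
    (coneAtInfty X) ×ˢ ({0} : Set ℝ) =
      closure {p : EuclideanSpace ℝ (Fin n) × ℝ |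
          ∃ x ∈ X, ∃ t : ℝ, 0 < t ∧ R ≤ ‖x‖ ∧ p = (t • x, t)} ∩
        {p : EuclideanSpace ℝ (Fin n) × ℝ | p.2 = 0} := by
  ext ⟨v, s⟩
  simp only [Set.mem_prod, Set.mem_singleton_iff, Set.mem_inter_iff, Set.mem_setOf_eq]
  constructor
  · rintro ⟨⟨x, t, hxX, htpos, hxn, hlim⟩, hs⟩
    subst hs
    refine ⟨?_, rfl⟩
    have htn : Tendsto (fun k => t k * ‖x k‖) atTop (𝓝 ‖v‖) := by
      refine hlim.norm.congr fun k => ?_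
      rw [norm_smul, Real.norm_eq_abs, abs_of_pos (htpos k)]
    have hne : ∀ᶠ k in atTop, ‖x k‖ ≠ 0 := by
      filter_upwards [hxn.eventually_ge_atTop 1] with k hk
      exact ne_of_gt (lt_of_lt_of_le zero_lt_one hk)
    have ht0 : Tendsto t atTop (𝓝 0) := by
      have := htn.mul hxn.inv_tendsto_atTop
      rw [mul_zero] at this
      refine this.congr' ?_
      filter_upwards [hne] with k hk
      simp only [Pi.inv_apply]
      field_simp
    refine mem_closure_of_tendsto
      (f := fun k : ℕ => ((t k • x k, t k) : EuclideanSpace ℝ (Fin n) × ℝ))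
      (hlim.prodMk_nhds ht0) ?_
    filter_upwards [hxn.eventually_ge_atTop R] with k hk
    exact ⟨x k, hxX k, t k, htpos k, hk, rfl⟩
  · rintro ⟨hcl, hs⟩
    subst hs
    refine ⟨?_, rfl⟩
    obtain ⟨p, hpmem, hplim⟩ := mem_closure_iff_seq_limit.mp hcl
    choose x hxX t htpos hRx hp using hpmem
    have h1 : Tendsto (fun k => t k • x k) atTop (𝓝 v) := by
      have := (continuous_fst.tendsto _).comp hplim
      refine this.congr fun k => ?_
      simp [Function.comp, hp k]
    have h2 : Tendsto t atTop (𝓝 0) := by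
      have := (continuous_snd.tendsto _).comp hplim
      refine this.congr fun k => ?_
      simp [Function.comp, hp k]
    by_cases hv : v = 0
    · subst hv; exact zero_mem_coneAtInfty X hX
    · have hnv : (0:ℝ) < ‖v‖ := norm_pos_iff.mpr hv
      have htn : Tendsto (fun k => ‖t k • x k‖) atTop (𝓝 ‖v‖) := h1.norm
      have hinv : Tendsto (fun k => (t k)⁻¹) atTop atTop := by
        refine Filter.Tendsto.inv_tendsto_nhdsGT_zero ?_
        exact tendsto_nhdsWithin_iff.mpr ⟨h2, Filter.Eventually.of_forall htpos⟩
      have hxn : Tendsto (fun k => ‖x k‖) atTop atTop := by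
        refine (hinv.atTop_mul_pos hnv htn).congr fun k => ?_
        rw [norm_smul, Real.norm_eq_abs, abs_of_pos (htpos k),
          inv_mul_cancel_left₀ (ne_of_gt (htpos k))]
      exact ⟨x, t, hxX, htpos, hxn, h1⟩
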